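/- For the 3D Lotka-Volterra system u₁' = u₁(c u₂ + u₃ + λ), u₂' = u₂(u₁ + a u₃ + μ), u₃' = u₃(b u₁ + u₂ + ν) with abc = −1 and ν = μb − λab, the quantity H₁ = ab·ln u₁ − b·ln u₂ + ln u₃ is conserved along any solution with positive components. -/

import Mathlib

theorem stmt4 (a b c lam mu nu : ℝ) (habc : a * b * c = -1) (hnu : nu = mu * b - lam * a * b)
    (u₁ u₂ u₃ : ℝ → ℝ)
    (h₁ : Differentiable ℝ u₁) (h₂ : Differentiable ℝ u₂) (h₃ : Differentiable ℝ u₃)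
    (hp₁ : ∀ t, 0 < u₁ t) (hp₂ : ∀ t, 0 < u₂ t) (hp₃ : ∀ t, 0 < u₃ t)
    (hode₁ : ∀ t, deriv u₁ t = u₁ t * (c * u₂ t + u₃ t + lam))
    (hode₂ : ∀ t, deriv u₂ t = u₂ t * (u₁ t + a * u₃ t + mu))
    (hode₃ : ∀ t, deriv u₃ t = u₃ t * (b * u₁ t + u₂ t + nu)) :
    ∀ t, deriv (fun t => a * b * Real.log (u₁ t) - b * Real.log (u₂ t) + Real.log (u₃ t)) t
      = 0 := by
  intro t
  have d₁ : HasDerivAt u₁ (deriv u₁ t) t := (h₁ t).hasDerivAt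
  have d₂ : HasDerivAt u₂ (deriv u₂ t) t := (h₂ t).hasDerivAt
  have d₃ : HasDerivAt u₃ (deriv u₃ t) t := (h₃ t).hasDerivAt
  have l₁ := (Real.hasDerivAt_log (hp₁ t).ne').comp t d₁
  have l₂ := (Real.hasDerivAt_log (hp₂ t).ne').comp t d₂
  have l₃ := (Real.hasDerivAt_log (hp₃ t).ne').comp t d₃
  have H := ((l₁.const_mul (a * b)).sub (l₂.const_mul b)).add l₃
  simp only [Function.comp] at H
  rw [(show HasDerivAt (fun t => a * b * Real.log (u₁ t) - b * Real.log (u₂ t) + Real.log (u₃ t)) _ t from H).deriv]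
  rw [hode₁, hode₂, hode₃]
  rw [inv_mul_cancel_left₀ (hp₁ t).ne', inv_mul_cancel_left₀ (hp₂ t).ne',
    inv_mul_cancel_left₀ (hp₃ t).ne', hnu]
  linear_combination (u₂ t) * habc
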